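/- Let g be differentiable and suppose G vanishes on the focal curve of g. For f(x) = c·g(x) with c ≠ 0, every point (x, y) of the focal curve of f with 1 + (c - 1)x ≠ 0 satisfies G(cx/(1 + (c - 1)x), y/(1 + (c - 1)x)) = 0. -/

import Mathlib

/-- If `G` vanishes on the focal curve of `g`, then for `f x = c * g x` with
`c ≠ 0`, every focal point `(x, y)` of `f` with `1 + (c - 1)x ≠ 0` satisfies
`G (c*x/(1 + (c-1)*x), y/(1 + (c-1)*x)) = 0`. -/
theorem stmt_11 (g : ℝ → ℝ) (hg : Differentiable ℝ g) (G : ℝ × ℝ → ℝ)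
    (hG : ∀ t : ℝ, deriv g t ≠ 1 →
      G (1 / (1 - deriv g t), (g t - t * deriv g t) / (1 - deriv g t)) = 0)
    (c : ℝ) (hc : c ≠ 0) (f : ℝ → ℝ) (hf : ∀ x, f x = c * g x)
    (t : ℝ) (ht : deriv f t ≠ 1)
    (hx : 1 + (c - 1) * (1 / (1 - deriv f t)) ≠ 0) :
    let x := 1 / (1 - deriv f t)
    let y := (f t - t * deriv f t) / (1 - deriv f t)
    G (c * x / (1 + (c - 1) * x), y / (1 + (c - 1) * x)) = 0 := by
  intro x y
  have hfg : f = fun u => c * g u := funext hf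
  have hf' : deriv f t = c * deriv g t := by
    rw [hfg, deriv_const_mul _ (hg t)]
  set d := deriv g t with hd
  have hcd : 1 - c * d ≠ 0 := by
    intro h
    apply ht
    rw [hf']
    linarith
  have hd1 : d ≠ 1 := by
    intro h
    apply hx
    have h1c : 1 - c ≠ 0 := by simpa [h] using hcd
    rw [hf', h]
    field_simp
    ring
  have h1 : 1 - d ≠ 0 := sub_ne_zero.mpr (fun h => hd1 h.symm)
  have hc1 : c - c * d ≠ 0 := by
    have := mul_ne_zero hc h1
    intro h; apply this; linarith [h]
  have key1 : c * x / (1 + (c - 1) * x) = 1 / (1 - d) := by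
    simp only [x, hf']
    field_simp
    linear_combination (mul_inv_cancel₀ hc1)
  have key2 : y / (1 + (c - 1) * x) = (g t - t * d) / (1 - d) := by
    simp only [x, y, hf', hf t]
    field_simp
    linear_combination (g t - t * d) * (mul_inv_cancel₀ hc1)
  rw [key1, key2]
  exact hG t hd1
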